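/- Let G be a balanced group and let H = ⟨h⟩ be an infinite cyclic subgroup of G such that the commensurator N_G[H] is generated by finitely many elements g_1, ..., g_n. Then there exists a finite-index subgroup H' ≤ H (namely H' = ⟨h^k⟩ for a suitable nonzero integer k) such that N_G[H] = N_G(H'), i.e., the commensurator of H equals the normalizer of H'. -/

import Mathlib

def IsBalanced (G : Type*) [Group G] : Prop :=
  ∀ g h : G, ¬ IsOfFinOrder h → ∀ k l : ℤ, k ≠ 0 → l ≠ 0 →
    g * h ^ k * g⁻¹ = h ^ l → |k| = |l|

open Subgroup Pointwise

/-- conjugation by an element that sends `x` to `x` or `x⁻¹` normalizes `zpowers x`. -/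
lemma mem_normalizer_zpowers_aux {G : Type*} [Group G] {g x : G}
    (hx : g * x * g⁻¹ = x ∨ g * x * g⁻¹ = x⁻¹) : g ∈ Subgroup.normalizer ((Subgroup.zpowers x : Subgroup G) : Set G) := by
  have cz : ∀ (a : G) (n : ℤ), a * x ^ n * a⁻¹ = (a * x * a⁻¹) ^ n := fun a n =>
    conj_zpow.symm
  have hx' : g⁻¹ * x * g⁻¹⁻¹ = x ∨ g⁻¹ * x * g⁻¹⁻¹ = x⁻¹ := by
    rcases hx with hx | hx
    · left
      conv_lhs => rw [← hx]
      group
    · right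
      have hxx : g * x⁻¹ * g⁻¹ = x :=
        calc g * x⁻¹ * g⁻¹ = (g * x * g⁻¹)⁻¹ := by group
          _ = x⁻¹⁻¹ := by rw [hx]
          _ = x := inv_inv x
      conv_lhs => rw [← hxx]
      group
  simp only [Subgroup.mem_normalizer_iff, Subgroup.mem_zpowers_iff]
  intro y
  constructor
  · rintro ⟨n, rfl⟩
    rcases hx with hx | hx
    · exact ⟨n, by rw [cz, hx]⟩
    · exact ⟨-n, by rw [cz, hx, inv_zpow, ← zpow_neg]⟩
  · rintro ⟨n, hn⟩
    have hy : y = g⁻¹ * x ^ n * g⁻¹⁻¹ := by rw [hn]; group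
    rcases hx' with hx' | hx'
    · exact ⟨n, by rw [hy, cz, hx']⟩
    · exact ⟨-n, by rw [hy, cz, hx', inv_zpow, ← zpow_neg]⟩


lemma commensurable_zpowers_zpow {G : Type*} [Group G] (h : G) {k : ℤ} (hk : k ≠ 0) :
    Commensurable (Subgroup.zpowers (h ^ k)) (Subgroup.zpowers h) := by
  have hle : Subgroup.zpowers (h ^ k) ≤ Subgroup.zpowers h :=
    Subgroup.zpowers_le.mpr ⟨k, rfl⟩
  constructor
  · -- finite index of ⟨h^k⟩ in ⟨h⟩
    rw [Subgroup.relIndex]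
    set H' : Subgroup (Subgroup.zpowers h) :=
      (Subgroup.zpowers (h ^ k)).subgroupOf (Subgroup.zpowers h)
    have hpos : 0 < (k.natAbs : ℤ) := by
      exact_mod_cast Int.natAbs_pos.mpr hk
    have hsurj : Function.Surjective
        (fun i : Fin k.natAbs => (QuotientGroup.mk (s := H')
          ⟨h ^ (i : ℤ), ⟨(i : ℤ), rfl⟩⟩ : Subgroup.zpowers h ⧸ H')) := by
      intro q
      induction q using QuotientGroup.induction_on with
      | H y =>
        obtain ⟨y, hy⟩ := y
        obtain ⟨m, rfl⟩ := Subgroup.mem_zpowers_iff.mp hy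
        set r : ℤ := m % (k.natAbs : ℤ) with hr
        have hr0 : 0 ≤ r := Int.emod_nonneg m (by exact_mod_cast Int.natAbs_ne_zero.mpr hk)
        have hrlt : r < (k.natAbs : ℤ) := Int.emod_lt_of_pos m hpos
        refine ⟨⟨r.toNat, by omega⟩, ?_⟩
        have hcoe : ((⟨r.toNat, by omega⟩ : Fin k.natAbs) : ℤ) = r := by
          simp [Int.toNat_of_nonneg hr0]
        rw [QuotientGroup.eq]
        have hdvd : k ∣ m - r := by
          have h1 : (k.natAbs : ℤ) ∣ m - r := Int.dvd_self_sub_of_emod_eq rfl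
          exact (Int.natAbs_dvd).mp h1
        obtain ⟨t, ht⟩ := hdvd
        refine Subgroup.mem_subgroupOf.mpr ?_
        refine ⟨t, ?_⟩
        show (h ^ k) ^ t = ((⟨h ^ ((⟨r.toNat, by omega⟩ : Fin k.natAbs) : ℤ), _⟩ :
          Subgroup.zpowers h)⁻¹ * ⟨h ^ m, hy⟩ : Subgroup.zpowers h)
        rw [Subgroup.coe_mul, Subgroup.coe_inv]
        show (h ^ k) ^ t = (h ^ ((⟨r.toNat, by omega⟩ : Fin k.natAbs) : ℤ))⁻¹ * h ^ m
        rw [hcoe, ← zpow_mul, ← zpow_neg, ← zpow_add, ← ht]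
        ring_nf
    haveI : Finite (Subgroup.zpowers h ⧸ H') := Finite.of_surjective _ hsurj
    exact Subgroup.index_ne_zero_of_finite
  · -- relindex of ⟨h⟩ in ⟨h^k⟩ is 1
    rw [Subgroup.relIndex, Subgroup.subgroupOf_eq_top.mpr hle, Subgroup.index_top]
    exact one_ne_zero

lemma key_extraction {G : Type*} [Group G] (hG : IsBalanced G) {h : G}
    (hh : ¬ IsOfFinOrder h) {g : G}
    (hg : g ∈ Commensurable.commensurator (Subgroup.zpowers h)) :
    ∃ k : ℤ, k ≠ 0 ∧ (g * h ^ k * g⁻¹ = h ^ k ∨ g * h ^ k * g⁻¹ = h ^ (-k)) := by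
  rw [Commensurable.commensurator_mem_iff] at hg
  have ha : g * h * g⁻¹ ∈ ConjAct.toConjAct g • Subgroup.zpowers h := by
    rw [Subgroup.mem_pointwise_smul_iff_inv_smul_mem]
    have : (ConjAct.toConjAct g)⁻¹ • (g * h * g⁻¹) = h := by
      rw [← map_inv, ConjAct.smul_def, ConjAct.ofConjAct_toConjAct]
      group
    rw [this]
    exact Subgroup.mem_zpowers h
  obtain ⟨n, hn0, -, hmem⟩ :=
    Subgroup.exists_pow_mem_of_relIndex_ne_zero hg.2 ha
  have hmem' : (g * h * g⁻¹) ^ n ∈ Subgroup.zpowers h := hmem.1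
  obtain ⟨m, hm⟩ := Subgroup.mem_zpowers_iff.mp hmem'
  have hconj : g * h ^ (n : ℤ) * g⁻¹ = h ^ m := by
    rw [hm, conj_pow, zpow_natCast]
  have hn0' : (n : ℤ) ≠ 0 := by exact_mod_cast hn0.ne'
  have hm0 : m ≠ 0 := by
    rintro rfl
    rw [zpow_zero] at hconj
    have h1 : h ^ (n : ℤ) = 1 := by
      have := congrArg (fun z => g⁻¹ * z * g) hconj
      simpa [mul_assoc] using this
    exact hh (isOfFinOrder_iff_pow_eq_one.mpr ⟨n, hn0, by exact_mod_cast h1⟩)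
  have habs := hG g h hh (n : ℤ) m hn0' hm0 hconj
  rcases abs_eq_abs.mp habs with heq | heq
  · exact ⟨(n : ℤ), hn0', Or.inl (by rw [hconj, heq])⟩
  · exact ⟨(n : ℤ), hn0', Or.inr (by rw [hconj, heq, neg_neg])⟩

theorem commensurator_eq_normalizer_of_balanced {G : Type*} [Group G] (hG : IsBalanced G)
    (h : G) (hh : ¬ IsOfFinOrder h)
    (hfg : (Subgroup.Commensurable.commensurator (Subgroup.zpowers h)).FG) :
    ∃ k : ℤ, k ≠ 0 ∧
      Subgroup.Commensurable.commensurator (Subgroup.zpowers h) =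
        Subgroup.normalizer ((Subgroup.zpowers (h ^ k) : Subgroup G) : Set G) := by
  classical
  obtain ⟨S, hS⟩ := hfg
  set C := Commensurable.commensurator (Subgroup.zpowers h) with hC
  -- choose an exponent for each element of the commensurator
  let f : G → ℤ := fun g =>
    if hg : g ∈ C then (key_extraction hG hh hg).choose else 1
  have hf0 : ∀ g, f g ≠ 0 := by
    intro g
    by_cases hg : g ∈ C
    · simp only [f, dif_pos hg]
      exact (key_extraction hG hh hg).choose_spec.1
    · simp [f, dif_neg hg]
  have hfspec : ∀ g ∈ C, g * h ^ (f g) * g⁻¹ = h ^ (f g) ∨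
      g * h ^ (f g) * g⁻¹ = h ^ (-(f g)) := by
    intro g hg
    simp only [f, dif_pos hg]
    exact (key_extraction hG hh hg).choose_spec.2
  set k : ℤ := ∏ g ∈ S, f g with hk
  have hk0 : k ≠ 0 := Finset.prod_ne_zero_iff.mpr fun g _ => hf0 g
  refine ⟨k, hk0, le_antisymm ?_ ?_⟩
  · -- commensurator ≤ normalizer
    rw [← hS]
    rw [Subgroup.closure_le]
    intro g hgS
    have hgC : g ∈ C := by
      rw [← hS]
      exact Subgroup.subset_closure hgS
    obtain ⟨t, ht⟩ : f g ∣ k := Finset.dvd_prod_of_mem f hgS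
    have hcz : ∀ n : ℤ, g * (h ^ (f g)) ^ n * g⁻¹ = (g * h ^ (f g) * g⁻¹) ^ n :=
      fun n => conj_zpow.symm
    apply mem_normalizer_zpowers_aux (x := h ^ k)
    rcases hfspec g hgC with hcase | hcase
    · left
      rw [ht, zpow_mul, hcz, hcase, ← zpow_mul]
    · right
      rw [ht, zpow_mul, hcz, hcase, ← zpow_mul, ← zpow_neg, ← zpow_mul]
      congr 1
      ring
  · -- normalizer ≤ commensurator
    have hcomm : Commensurable (Subgroup.zpowers (h ^ k)) (Subgroup.zpowers h) :=
      commensurable_zpowers_zpow h hk0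
    rw [hC, ← Commensurable.eq hcomm]
    intro g hg
    rw [Commensurable.commensurator_mem_iff]
    have hsmul : ConjAct.toConjAct g • Subgroup.zpowers (h ^ k) =
        Subgroup.zpowers (h ^ k) := by
      ext x
      rw [Subgroup.mem_pointwise_smul_iff_inv_smul_mem, ← map_inv, ConjAct.smul_def,
        ConjAct.ofConjAct_toConjAct]
      exact (Subgroup.mem_normalizer_iff.mp (inv_mem hg) x).symm
    rw [hsmul]
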